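/- Let G be a simple graph and let D be a divisor on G of rank r = r(D). For every vertex P of G there exists an effective divisor E of degree r + 1 with E(P) = 0 and |D − E| = ∅ (i.e., a proof for the rank of D not supported at P). -/

import Mathlib

open scoped Classical

/-- A graph: a finite connected multigraph with no loop edges, given by a symmetric
edge-multiplicity function on a finite nonempty vertex type. -/
structure Multigraph where
  V : Type
  [fintypeV : Fintype V]
  [decEqV : DecidableEq V]
  [nonemptyV : Nonempty V]
  adj : V → V → ℕ
  adj_symm : ∀ u v, adj u v = adj v u
  adj_loopless : ∀ v, adj v v = 0
  conn : ∀ u v, Relation.ReflTransGen (fun a b => adj a b ≠ 0) u v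

attribute [instance] Multigraph.fintypeV Multigraph.decEqV Multigraph.nonemptyV

namespace Multigraph

variable (G : Multigraph)

/-- A simple graph: no multiple edges and more than one vertex. -/
def Simple : Prop :=
  (∀ u v, G.adj u v ≤ 1) ∧ 1 < Fintype.card G.V

/-- The degree of a divisor. -/
def deg (D : G.V → ℤ) : ℤ := ∑ v, D v

/-- A divisor is effective if all its coefficients are nonnegative. -/
def Effective (D : G.V → ℤ) : Prop := ∀ v, 0 ≤ D v

/-- The Laplacian of an integer-valued function on the vertices. -/
def lap (f : G.V → ℤ) : G.V → ℤ := fun v => ∑ w, (G.adj v w : ℤ) * (f v - f w)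

/-- The linear system `|D|` is nonempty, i.e. `D` is linearly equivalent to an
effective divisor. -/
def LinNonempty (D : G.V → ℤ) : Prop :=
  ∃ f : G.V → ℤ, G.Effective (D - G.lap f)

/-- The Baker–Norine rank of a divisor: `-1` if `|D| = ∅`, otherwise the maximal
`k` such that `|D - E| ≠ ∅` for every effective divisor `E` of degree `k`. -/
noncomputable def rank (D : G.V → ℤ) : ℤ :=
  if G.LinNonempty D then
    ((sSup {k : ℕ | ∀ E : G.V → ℤ, G.Effective E → G.deg E = (k : ℤ) →
        G.LinNonempty (D - E)} : ℕ) : ℤ)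
  else -1

/-- The divisor `n • P`. -/
def pt (P : G.V) (n : ℤ) : G.V → ℤ := fun v => if v = P then n else 0

/-- The rank Weierstrass set of `G` at `P`. -/
def Hr (P : G.V) : Set ℕ :=
  {n : ℕ | G.rank (G.pt P ((n : ℤ) - 1)) < G.rank (G.pt P (n : ℤ))}

/-- The functional Weierstrass set of `G` at `P`: pole orders at `P` of functions
with a unique pole at `P`. -/
def Hf (P : G.V) : Set ℕ :=
  {n : ℕ | ∃ f : G.V → ℤ, G.lap f P = -(n : ℤ) ∧ ∀ Q, Q ≠ P → 0 ≤ G.lap f Q}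

/-- The number of edges joining `Q` to vertices outside `A`. -/
def outdeg (A : Finset G.V) (Q : G.V) : ℕ := ∑ R ∈ Aᶜ, G.adj Q R

/-- A divisor is `P`-reduced. -/
def Reduced (P : G.V) (D : G.V → ℤ) : Prop :=
  (∀ Q, Q ≠ P → 0 ≤ D Q) ∧
  ∀ A : Finset G.V, A.Nonempty → P ∉ A → ∃ Q ∈ A, D Q < (G.outdeg A Q : ℤ)

/-- `G` is the graph `B_n` with two vertices joined by `n` parallel edges. -/
def IsBanana (n : ℕ) : Prop :=
  Fintype.card G.V = 2 ∧ ∀ u v, u ≠ v → G.adj u v = n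

/-- `G` is the complete graph on `n` vertices. -/
def IsComplete (n : ℕ) : Prop :=
  Fintype.card G.V = n ∧ ∀ u v, u ≠ v → G.adj u v = 1

/-- `G` is the complete bipartite graph with parts `A` (of size `m`) and its
complement (of size `n`). -/
def IsCompleteBipartite (A : Finset G.V) (m n : ℕ) : Prop :=
  A.card = m ∧ Aᶜ.card = n ∧
  ∀ u v, G.adj u v = if (u ∈ A ∧ v ∉ A) ∨ (u ∉ A ∧ v ∈ A) then 1 else 0

/-- `λ_Q(k)`: the least `n` with `r(nQ) = k`. -/
noncomputable def lam (Q : G.V) (k : ℕ) : ℕ :=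
  sInf {n : ℕ | G.rank (G.pt Q (n : ℤ)) = (k : ℤ)}

end Multigraph

/-- `G` is the vertex gluing of `G₁` and `G₂` identifying `P₁` and `P₂` into `P`. -/
def IsVertexGluing (G G₁ G₂ : Multigraph) (P : G.V) (P₁ : G₁.V) (P₂ : G₂.V) : Prop :=
  ∃ (ι₁ : G₁.V → G.V) (ι₂ : G₂.V → G.V),
    Function.Injective ι₁ ∧ Function.Injective ι₂ ∧
    ι₁ P₁ = P ∧ ι₂ P₂ = P ∧
    (∀ a b, ι₁ a = ι₂ b → ι₁ a = P) ∧
    (∀ v : G.V, (∃ a, ι₁ a = v) ∨ (∃ b, ι₂ b = v)) ∧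
    (∀ a b, G.adj (ι₁ a) (ι₁ b) = G₁.adj a b) ∧
    (∀ a b, G.adj (ι₂ a) (ι₂ b) = G₂.adj a b) ∧
    (∀ a b, ι₁ a ≠ P → ι₂ b ≠ P → G.adj (ι₁ a) (ι₂ b) = 0)

namespace Multigraph

variable (G : Multigraph)

lemma lap_add (f g : G.V → ℤ) : G.lap (f + g) = G.lap f + G.lap g := by
  funext v
  simp only [lap, Pi.add_apply]
  rw [← Finset.sum_add_distrib]
  exact Finset.sum_congr rfl fun w _ => by ring

lemma lap_const (c : ℤ) : G.lap (fun _ => c) = 0 := by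
  funext v
  simp [lap]

lemma lin_sub_lap (D g : G.V → ℤ) :
    G.LinNonempty (D - G.lap g) ↔ G.LinNonempty D := by
  constructor
  · rintro ⟨f, hf⟩
    refine ⟨g + f, fun v => ?_⟩
    have := hf v
    rw [lap_add G g f]
    simp only [Pi.sub_apply, Pi.add_apply] at this ⊢
    linarith
  · rintro ⟨f, hf⟩
    refine ⟨f - g, fun v => ?_⟩
    have := hf v
    have hfg : G.lap ((f - g) + g) = G.lap (f - g) + G.lap g := lap_add G _ _
    rw [sub_add_cancel] at hfg
    have h2 : G.lap f v = G.lap (f - g) v + G.lap g v := by rw [hfg]; simp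
    simp only [Pi.sub_apply] at this ⊢
    linarith

lemma deg_sub (X Y : G.V → ℤ) : G.deg (X - Y) = G.deg X - G.deg Y := by
  simp [deg, Finset.sum_sub_distrib]

lemma deg_add (X Y : G.V → ℤ) : G.deg (X + Y) = G.deg X + G.deg Y := by
  simp [deg, Finset.sum_add_distrib]

lemma deg_lap (f : G.V → ℤ) : G.deg (G.lap f) = 0 := by
  simp only [deg, lap, mul_sub]
  simp only [Finset.sum_sub_distrib]
  have h : ∑ v : G.V, ∑ w : G.V, (G.adj v w : ℤ) * f w
      = ∑ v : G.V, ∑ w : G.V, (G.adj v w : ℤ) * f v := by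
    rw [Finset.sum_comm]
    exact Finset.sum_congr rfl fun v _ => Finset.sum_congr rfl fun w _ => by rw [G.adj_symm]
  rw [h, sub_self]

lemma deg_nonneg_of_lin (D : G.V → ℤ) (h : G.LinNonempty D) : 0 ≤ G.deg D := by
  obtain ⟨f, hf⟩ := h
  have h1 : 0 ≤ G.deg (D - G.lap f) := Finset.sum_nonneg fun v _ => hf v
  rw [deg_sub, deg_lap] at h1
  linarith

lemma deg_pt (Q : G.V) (n : ℤ) : G.deg (G.pt Q n) = n := by
  simp [deg, pt]

lemma eff_pt (Q : G.V) (n : ℤ) (hn : 0 ≤ n) : G.Effective (G.pt Q n) := by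
  intro v; simp only [pt]; split <;> simp [hn]

lemma lin_mono (D E : G.V → ℤ) (hE : G.Effective E) (h : G.LinNonempty (D - E)) :
    G.LinNonempty D := by
  obtain ⟨f, hf⟩ := h
  refine ⟨f, fun v => ?_⟩
  have h1 := hf v
  have h2 := hE v
  simp only [Pi.sub_apply] at h1 ⊢
  linarith

lemma sum_lap_eq (f : G.V → ℤ) (A : Finset G.V) :
    ∑ v ∈ A, G.lap f v = ∑ v ∈ A, ∑ w ∈ Aᶜ, (G.adj v w : ℤ) * (f v - f w) := by
  have h1 : ∀ v, G.lap f v = (∑ w ∈ A, (G.adj v w : ℤ) * (f v - f w)) +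
      ∑ w ∈ Aᶜ, (G.adj v w : ℤ) * (f v - f w) := by
    intro v
    rw [Finset.sum_add_sum_compl]
    rfl
  simp only [h1, Finset.sum_add_distrib]
  have h2 : ∑ v ∈ A, ∑ w ∈ A, (G.adj v w : ℤ) * (f v - f w) = 0 := by
    simp only [mul_sub, Finset.sum_sub_distrib]
    have h : ∑ v ∈ A, ∑ w ∈ A, (G.adj v w : ℤ) * f w
        = ∑ v ∈ A, ∑ w ∈ A, (G.adj v w : ℤ) * f v := by
      rw [Finset.sum_comm]
      exact Finset.sum_congr rfl fun v _ => Finset.sum_congr rfl fun w _ => by rw [G.adj_symm]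
    rw [h, sub_self]
  rw [h2, zero_add]

lemma exists_boundary (A : Finset G.V) (a : G.V) (ha : a ∈ A) (b : G.V) (hb' : b ∉ A) :
    ∃ v ∈ A, ∃ w, w ∉ A ∧ G.adj v w ≠ 0 := by
  have key : ∀ b, Relation.ReflTransGen (fun x y => G.adj x y ≠ 0) a b → b ∉ A →
      ∃ v ∈ A, ∃ w, w ∉ A ∧ G.adj v w ≠ 0 := by
    intro b h
    induction h with
    | refl => intro hb; exact absurd ha hb
    | @tail c d h1 h2 ih =>
        intro hd
        by_cases hc : c ∈ A
        · exact ⟨c, hc, d, hd, h2⟩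
        · exact ih hc
  exact key b (G.conn a b) hb'

lemma maxset (D2 : G.V → ℤ) (P : G.V)
    (hR : ∀ A : Finset G.V, A.Nonempty → P ∉ A → ∃ v ∈ A, D2 v < (G.outdeg A v : ℤ))
    (W f : G.V → ℤ) (hW : G.Effective W)
    (h : ∀ v, 0 ≤ D2 v - W v - G.lap f v) :
    ∀ v, f v ≤ f P := by
  obtain ⟨m, -, hm⟩ := Finset.exists_max_image Finset.univ f ⟨P, Finset.mem_univ P⟩
  have hm' : ∀ v, f v ≤ f m := fun v => hm v (Finset.mem_univ v)
  set A : Finset G.V := Finset.univ.filter (fun v => f v = f m) with hA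
  by_cases hP : P ∈ A
  · intro v
    have hfP : f P = f m := by simpa [hA] using hP
    rw [hfP]; exact hm' v
  · exfalso
    obtain ⟨v, hvA, hv⟩ := hR A ⟨m, by simp [hA]⟩ hP
    have hfv : f v = f m := by simpa [hA] using hvA
    have hlap : (G.outdeg A v : ℤ) ≤ G.lap f v := by
      have hsplit : G.lap f v = (∑ w ∈ A, (G.adj v w : ℤ) * (f v - f w)) +
          ∑ w ∈ Aᶜ, (G.adj v w : ℤ) * (f v - f w) := by
        rw [Finset.sum_add_sum_compl]; rfl
      have hz : ∑ w ∈ A, (G.adj v w : ℤ) * (f v - f w) = 0 := by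
        apply Finset.sum_eq_zero
        intro w hw
        have : f w = f m := by simpa [hA] using hw
        rw [hfv, this]; ring
      have hge : ∑ w ∈ Aᶜ, (G.adj v w : ℤ) ≤ ∑ w ∈ Aᶜ, (G.adj v w : ℤ) * (f v - f w) := by
        apply Finset.sum_le_sum
        intro w hw
        have hwA : w ∉ A := Finset.mem_compl.1 hw
        have : f w ≠ f m := by simpa [hA] using hwA
        have h1 : f w + 1 ≤ f v := by
          rw [hfv]
          have := hm' w
          omega
        have h2 : (1 : ℤ) ≤ f v - f w := by linarith
        have h3 : (0 : ℤ) ≤ (G.adj v w : ℤ) := Int.natCast_nonneg _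
        nlinarith
      have hout : (G.outdeg A v : ℤ) = ∑ w ∈ Aᶜ, (G.adj v w : ℤ) := by
        simp [outdeg]
      rw [hsplit, hz, zero_add, hout]
      exact hge
    have h1 := h v
    have h2 := hW v
    linarith

lemma bound_aux (P : G.V) (D3 f : G.V → ℤ) (hfP : f P = 0)
    (hfS : ∀ v, v ≠ P → 0 ≤ D3 v - G.lap f v) :
    ∀ v, f v ≤ (Fintype.card G.V : ℤ) * ((∑ u, max (D3 u) 0) + 1) := by
  set K : ℤ := ∑ u, max (D3 u) 0 with hK
  have hK0 : 0 ≤ K := Finset.sum_nonneg fun u _ => le_max_right _ _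
  have gap : ∀ t : ℤ, 1 ≤ t → (Finset.univ.filter fun v => t ≤ f v).Nonempty →
      ∃ v, t ≤ f v ∧ f v < t + K + 1 := by
    intro t ht hne
    by_contra hcon
    push_neg at hcon
    set A := Finset.univ.filter (fun v => t ≤ f v) with hA
    obtain ⟨a, ha⟩ := hne
    have hPA : P ∉ A := by
      simp only [hA, Finset.mem_filter, Finset.mem_univ, true_and, hfP]
      linarith
    obtain ⟨v₀, hv₀A, w₀, hw₀A, hadj⟩ := exists_boundary G A a ha P hPA
    have htnn : ∀ v ∈ A, ∀ w ∈ Aᶜ, (0:ℤ) ≤ (G.adj v w : ℤ) * (f v - f w) := by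
      intro v hv w hw
      have h1 : t ≤ f v := by simpa [hA] using hv
      have h2 : ¬ t ≤ f w := by
        have := Finset.mem_compl.1 hw; simpa [hA] using this
      have h3 := Int.natCast_nonneg (G.adj v w)
      nlinarith
    have hub : ∑ v ∈ A, G.lap f v ≤ K := by
      have s1 : ∑ v ∈ A, G.lap f v ≤ ∑ v ∈ A, D3 v := by
        apply Finset.sum_le_sum
        intro v hv
        have hvP : v ≠ P := fun h => hPA (h ▸ hv)
        have := hfS v hvP; linarith
      have s2 : ∑ v ∈ A, D3 v ≤ ∑ v ∈ A, max (D3 v) 0 :=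
        Finset.sum_le_sum fun v _ => le_max_left _ _
      have s3 : ∑ v ∈ A, max (D3 v) 0 ≤ K :=
        Finset.sum_le_sum_of_subset_of_nonneg (Finset.subset_univ A)
          (fun v _ _ => le_max_right _ _)
      linarith
    have hlb : (K + 2) ≤ ∑ v ∈ A, G.lap f v := by
      rw [sum_lap_eq]
      have hv₀ : (K+2 : ℤ) ≤ ∑ w ∈ Aᶜ, (G.adj v₀ w : ℤ) * (f v₀ - f w) := by
        have hterm : (K+2 : ℤ) ≤ (G.adj v₀ w₀ : ℤ) * (f v₀ - f w₀) := by
          have h1 : t ≤ f v₀ := by simpa [hA] using hv₀A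
          have h1' : t + K + 1 ≤ f v₀ := hcon _ h1
          have h2 : ¬ t ≤ f w₀ := by simpa [hA] using hw₀A
          have h3 : (1:ℤ) ≤ (G.adj v₀ w₀ : ℤ) := by
            exact_mod_cast Nat.one_le_iff_ne_zero.2 hadj
          nlinarith
        calc (K+2:ℤ) ≤ (G.adj v₀ w₀ : ℤ) * (f v₀ - f w₀) := hterm
          _ ≤ _ := Finset.single_le_sum (fun w hw => htnn v₀ hv₀A w hw)
                (Finset.mem_compl.2 hw₀A)
      calc (K+2:ℤ) ≤ ∑ w ∈ Aᶜ, (G.adj v₀ w : ℤ) * (f v₀ - f w) := hv₀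
        _ ≤ _ := Finset.single_le_sum
              (fun v hv => Finset.sum_nonneg fun w hw => htnn v hv w hw) hv₀A
    linarith
  have chain : ∀ j : ℕ,
      ((Finset.univ.filter fun v => (1 + (j:ℤ) * (K+1) : ℤ) ≤ f v).card : ℤ)
        ≤ (Fintype.card G.V : ℤ) - j ∨
      (Finset.univ.filter fun v => (1 + (j:ℤ) * (K+1) : ℤ) ≤ f v) = ∅ := by
    intro j
    induction j with
    | zero =>
        left
        simp only [Nat.cast_zero, sub_zero]
        exact_mod_cast Nat.cast_le.2 (Finset.card_filter_le _ _)
    | succ j ih =>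
        rcases Finset.eq_empty_or_nonempty
          (Finset.univ.filter fun v => (1 + ((j:ℤ)+1) * (K+1) : ℤ) ≤ f v) with he | hne
        · right; push_cast; exact_mod_cast he
        · left
          set t : ℤ := 1 + (j:ℤ) * (K+1) with hT
          have hsub : (Finset.univ.filter fun v => (1 + ((j:ℤ)+1) * (K+1) : ℤ) ≤ f v) ⊆
              (Finset.univ.filter fun v => t ≤ f v) := by
            intro v hv
            simp only [Finset.mem_filter, Finset.mem_univ, true_and] at hv ⊢
            nlinarith [Nat.cast_nonneg (α := ℤ) j]
          have hAne : (Finset.univ.filter fun v => t ≤ f v).Nonempty := by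
            obtain ⟨v, hv⟩ := hne
            exact ⟨v, hsub hv⟩
          have ht1 : (1:ℤ) ≤ t := by
            have := Nat.cast_nonneg (α := ℤ) j
            nlinarith
          obtain ⟨v, hv1, hv2⟩ := gap t ht1 hAne
          have hvin : v ∈ Finset.univ.filter fun v => t ≤ f v := by
            simp [hv1]
          have hvout : v ∉ Finset.univ.filter fun v => (1 + ((j:ℤ)+1) * (K+1) : ℤ) ≤ f v := by
            simp only [Finset.mem_filter, Finset.mem_univ, true_and, not_le]
            nlinarith
          have hss : (Finset.univ.filter fun v => (1 + ((j:ℤ)+1) * (K+1) : ℤ) ≤ f v) ⊂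
              (Finset.univ.filter fun v => t ≤ f v) :=
            Finset.ssubset_iff_of_subset hsub |>.2 ⟨v, hvin, hvout⟩
          have hcard := Finset.card_lt_card hss
          have hIH : ((Finset.univ.filter fun v => t ≤ f v).card : ℤ)
              ≤ (Fintype.card G.V : ℤ) - j := by
            rcases ih with h | h
            · exact h
            · rw [h] at hAne; exact absurd rfl (Finset.nonempty_iff_ne_empty.1 hAne)
          push_cast
          have : ((Finset.univ.filter fun v => (1 + ((j:ℤ)+1) * (K+1) : ℤ) ≤ f v).card : ℤ)
              < ((Finset.univ.filter fun v => t ≤ f v).card : ℤ) := by exact_mod_cast hcard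
          linarith
  intro v
  by_contra hcon
  push_neg at hcon
  set n := Fintype.card G.V
  have hmem : v ∈ Finset.univ.filter fun u => (1 + (n:ℤ) * (K+1) : ℤ) ≤ f u := by
    simp only [Finset.mem_filter, Finset.mem_univ, true_and]
    linarith
  rcases chain n with h | h
  · have h1 : (1:ℤ) ≤ (Finset.univ.filter fun u => (1 + (n:ℤ) * (K+1) : ℤ) ≤ f u).card := by
      exact_mod_cast Finset.card_pos.2 ⟨v, hmem⟩
    have h2 : ((Finset.univ.filter fun u => (1 + (n:ℤ) * (K+1) : ℤ) ≤ f u).card : ℤ)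
        ≤ (n:ℤ) - n := h
    linarith
  · rw [h] at hmem; exact absurd hmem (Finset.notMem_empty v)

lemma exists_reduced (P : G.V) (D3 : G.V → ℤ) (hLin : G.LinNonempty D3) :
    ∃ f : G.V → ℤ, (∀ v, v ≠ P → 0 ≤ D3 v - G.lap f v) ∧
      (∀ A : Finset G.V, A.Nonempty → P ∉ A →
        ∃ v ∈ A, (D3 v - G.lap f v) < (G.outdeg A v : ℤ)) := by
  set S : (G.V → ℤ) → Prop := fun f => f P = 0 ∧ ∀ v, v ≠ P → 0 ≤ D3 v - G.lap f v with hS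
  have hSne : ∃ f, S f := by
    obtain ⟨f₀, hf₀⟩ := hLin
    refine ⟨f₀ - (fun _ => f₀ P), by simp, fun v _ => ?_⟩
    have hlap : G.lap (f₀ - fun _ => f₀ P) = G.lap f₀ := by
      have h := lap_add G (f₀ - fun _ => f₀ P) (fun _ => f₀ P)
      rw [sub_add_cancel, lap_const] at h
      rw [h]; simp
    rw [hlap]
    simpa using hf₀ v
  have hbdd : ∃ b : ℤ, ∀ z : ℤ, (∃ f, S f ∧ ∑ v, f v = z) → z ≤ b := by
    refine ⟨(Fintype.card G.V : ℤ) * ((Fintype.card G.V : ℤ) * ((∑ u, max (D3 u) 0) + 1)),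
      fun z ⟨f, hf, hz⟩ => ?_⟩
    have hb := bound_aux G P D3 f hf.1 hf.2
    calc z = ∑ v, f v := hz.symm
      _ ≤ ∑ _v : G.V, (Fintype.card G.V : ℤ) * ((∑ u, max (D3 u) 0) + 1) :=
          Finset.sum_le_sum fun v _ => hb v
      _ = _ := by rw [Finset.sum_const]; simp [mul_comm]
  obtain ⟨z, ⟨fm, hfm, hfmz⟩, hzmax⟩ :=
    Int.exists_greatest_of_bdd hbdd ⟨_, hSne.choose, hSne.choose_spec, rfl⟩
  refine ⟨fm, hfm.2, ?_⟩
  intro A hAne hPA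
  by_contra hcon
  push_neg at hcon
  -- fire A : fm + indicator of A stays in S with larger sum
  set χ : G.V → ℤ := fun v => if v ∈ A then 1 else 0 with hχ
  have hlapχ : ∀ v, v ∈ A → G.lap χ v = (G.outdeg A v : ℤ) := by
    intro v hv
    have hsplit : G.lap χ v = (∑ w ∈ A, (G.adj v w : ℤ) * (χ v - χ w)) +
        ∑ w ∈ Aᶜ, (G.adj v w : ℤ) * (χ v - χ w) := by
      rw [Finset.sum_add_sum_compl]; rfl
    have hz1 : ∑ w ∈ A, (G.adj v w : ℤ) * (χ v - χ w) = 0 :=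
      Finset.sum_eq_zero fun w hw => by simp [hχ, hv, hw]
    have hz2 : ∑ w ∈ Aᶜ, (G.adj v w : ℤ) * (χ v - χ w) = ∑ w ∈ Aᶜ, (G.adj v w : ℤ) := by
      apply Finset.sum_congr rfl
      intro w hw
      have hwA : w ∉ A := Finset.mem_compl.1 hw
      simp [hχ, hv, hwA]
    rw [hsplit, hz1, hz2, zero_add]
    simp [outdeg]
  have hlapχ2 : ∀ v, v ∉ A → G.lap χ v ≤ 0 := by
    intro v hv
    apply Finset.sum_nonpos
    intro w _
    by_cases hw : w ∈ A
    · simp [hχ, hv, hw]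
    · simp [hχ, hv, hw]
  have hSg : S (fm + χ) := by
    constructor
    · simp [hχ, hPA, hfm.1]
    · intro v hvP
      rw [lap_add]
      by_cases hv : v ∈ A
      · have h1 := hcon v hv
        have h2 := hlapχ v hv
        simp only [Pi.add_apply]
        linarith
      · have h1 := hfm.2 v hvP
        have h2 := hlapχ2 v hv
        simp only [Pi.add_apply]
        linarith
  have hsum : ∑ v, (fm + χ) v = z + A.card := by
    simp only [Pi.add_apply, Finset.sum_add_distrib, hfmz]
    congr 1
    rw [hχ]
    rw [Finset.sum_ite_mem]
    simp [Finset.univ_inter]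
  have := hzmax (z + A.card) ⟨fm + χ, hSg, hsum⟩
  have hA1 : (1:ℤ) ≤ A.card := by exact_mod_cast Finset.card_pos.2 hAne
  linarith

lemma key (hG : G.Simple) (P : G.V) (D3 : G.V → ℤ)
    (h1 : G.LinNonempty D3) (h2 : ¬ G.LinNonempty (D3 - G.pt P 1)) :
    ∃ Q, Q ≠ P ∧ ¬ G.LinNonempty (D3 - G.pt Q 1) := by
  obtain ⟨g, hgEff, hgRed⟩ := exists_reduced G P D3 h1
  set D2 : G.V → ℤ := D3 - G.lap g with hD2
  have hD2v : ∀ v, D2 v = D3 v - G.lap g v := fun v => rfl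
  have hR : ∀ A : Finset G.V, A.Nonempty → P ∉ A → ∃ v ∈ A, D2 v < (G.outdeg A v : ℤ) := by
    intro A hA hPA
    obtain ⟨v, hv, hlt⟩ := hgRed A hA hPA
    exact ⟨v, hv, hlt⟩
  have hEffOff : ∀ v, v ≠ P → 0 ≤ D2 v := fun v hv => hgEff v hv
  have hLin2 : G.LinNonempty D2 := (lin_sub_lap G D3 g).2 h1
  -- D2 P = 0
  have hD2P : D2 P = 0 := by
    obtain ⟨f, hf⟩ := hLin2
    have hmax := maxset G D2 P hR 0 f (fun v => le_refl 0) (fun v => by simpa using hf v)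
    have hlapP : 0 ≤ G.lap f P :=
      Finset.sum_nonneg fun w _ => by
        have := hmax w
        have h3 := Int.natCast_nonneg (G.adj P w)
        nlinarith
    have hfP := hf P
    simp only [Pi.sub_apply] at hfP
    have hge : 0 ≤ D2 P := by linarith
    by_contra hne
    have hgt : 1 ≤ D2 P := by omega
    apply h2
    rw [show D3 - G.pt P 1 = (D2 - G.pt P 1) + G.lap g by rw [hD2]; ring]
    have : G.LinNonempty (D2 - G.pt P 1) := by
      refine ⟨0, fun v => ?_⟩
      have hl0 : G.lap (0 : G.V → ℤ) = 0 := by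
        have := lap_const G 0
        exact this
      simp only [Pi.sub_apply, hl0, Pi.zero_apply, sub_zero, pt]
      by_cases hv : v = P
      · subst hv; simp; linarith
      · simp [hv]; exact hEffOff v hv
    have heq : D3 - G.pt P 1 - G.lap g = D2 - G.pt P 1 := by rw [hD2]; ring
    rw [show (D2 - G.pt P 1) + G.lap g = D3 - G.pt P 1 by rw [hD2]; ring]
    apply (lin_sub_lap G (D3 - G.pt P 1) g).1
    rw [heq]
    exact this
  -- find Q adjacent to P with D2 Q = 0
  obtain ⟨b, hb⟩ := Fintype.exists_ne_of_one_lt_card hG.2 P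
  have hne : ({P}ᶜ : Finset G.V).Nonempty := ⟨b, by simp [hb]⟩
  obtain ⟨Q, hQA, hQlt⟩ := hR ({P}ᶜ) hne (by simp)
  have hQP : Q ≠ P := by simpa using hQA
  have hout : G.outdeg ({P}ᶜ : Finset G.V) Q = G.adj Q P := by
    simp [outdeg]
  rw [hout] at hQlt
  have hadjle : G.adj Q P ≤ 1 := hG.1 Q P
  have hD2Q0 : D2 Q = 0 := by
    have := hEffOff Q hQP
    have h1' : (G.adj Q P : ℤ) ≤ 1 := by exact_mod_cast hadjle
    omega
  have hadjQP : 1 ≤ G.adj Q P := by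
    have h0 : (0:ℤ) < (G.adj Q P : ℤ) := by
      have := hEffOff Q hQP
      linarith
    exact_mod_cast h0
  refine ⟨Q, hQP, ?_⟩
  intro hLinQ
  -- transfer to D2
  have hLinQ2 : G.LinNonempty (D2 - G.pt Q 1) := by
    rw [show D2 - G.pt Q 1 = (D3 - G.pt Q 1) - G.lap g by rw [hD2]; ring]
    exact (lin_sub_lap G _ g).2 hLinQ
  obtain ⟨f, hf⟩ := hLinQ2
  have hWeff : G.Effective (G.pt Q 1) := eff_pt G Q 1 (by norm_num)
  have hmax := maxset G D2 P hR (G.pt Q 1) f hWeff (fun v => by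
    have := hf v
    simp only [Pi.sub_apply] at this ⊢
    linarith)
  -- at P : lap f P ≤ 0, all terms nonneg ⇒ each term zero ⇒ f Q = f P
  have hPQ : ¬ P = Q := fun h => hQP h.symm
  have hfP := hf P
  simp only [Pi.sub_apply, pt, if_neg hPQ] at hfP
  have hterms : ∀ w ∈ Finset.univ, (0:ℤ) ≤ (G.adj P w : ℤ) * (f P - f w) := fun w _ => by
    nlinarith [hmax w, Int.natCast_nonneg (G.adj P w)]
  have hsum0 : G.lap f P = 0 := le_antisymm (by linarith) (Finset.sum_nonneg hterms)
  have heach := (Finset.sum_eq_zero_iff_of_nonneg hterms).1 hsum0 Q (Finset.mem_univ Q)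
  have hadjPQ : (1:ℤ) ≤ (G.adj P Q : ℤ) := by
    rw [G.adj_symm]
    exact_mod_cast hadjQP
  have hfQ : f Q = f P := by
    rcases mul_eq_zero.1 heach with h | h
    · linarith
    · linarith
  have hfQ2 := hf Q
  simp only [Pi.sub_apply, pt, if_pos rfl, if_true] at hfQ2
  have hlapQ : 0 ≤ G.lap f Q := Finset.sum_nonneg fun w _ => by
    nlinarith [hmax w, Int.natCast_nonneg (G.adj Q w), hfQ]
  linarith

lemma main_ind (hG : G.Simple) (P : G.V) :
    ∀ k : ℕ, ∀ D E0 : G.V → ℤ, G.Effective E0 → G.deg E0 = (k:ℤ) →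
      ¬ G.LinNonempty (D - E0) →
      ∃ E, G.Effective E ∧ G.deg E = (k:ℤ) ∧ E P = 0 ∧ ¬ G.LinNonempty (D - E) := by
  intro k
  induction k with
  | zero =>
      intro D E0 hE0 hdeg hnl
      have hz : ∀ v, E0 v = 0 := fun v =>
        (Finset.sum_eq_zero_iff_of_nonneg (fun u _ => hE0 u)).1 hdeg v (Finset.mem_univ v)
      exact ⟨E0, hE0, hdeg, hz P, hnl⟩
  | succ k ih =>
      intro D E0 hE0 hdeg hnl
      push_cast
      have caseA : ∀ (D' E1 : G.V → ℤ) (Q : G.V), Q ≠ P → 0 < E1 Q → G.Effective E1 →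
          G.deg E1 = ((k:ℤ)+1) → ¬ G.LinNonempty (D' - E1) →
          ∃ E, G.Effective E ∧ G.deg E = ((k:ℤ)+1) ∧ E P = 0 ∧
            ¬ G.LinNonempty (D' - E) := by
        intro D' E1 Q hQP hQpos hEff hdeg1 hnl1
        have h1 : G.Effective (E1 - G.pt Q 1) := by
          intro v
          simp only [Pi.sub_apply, pt]
          by_cases hv : v = Q
          · subst hv; simp; omega
          · simp [hv]; exact hEff v
        have hdeg2 : G.deg (E1 - G.pt Q 1) = (k:ℤ) := by
          rw [deg_sub, deg_pt, hdeg1]; ring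
        have hnl2 : ¬ G.LinNonempty ((D' - G.pt Q 1) - (E1 - G.pt Q 1)) := by
          rw [sub_sub_sub_cancel_right]; exact hnl1
        obtain ⟨F, hF, hdegF, hFP, hnlF⟩ := ih (D' - G.pt Q 1) (E1 - G.pt Q 1) h1 hdeg2 hnl2
        refine ⟨F + G.pt Q 1, ?_, ?_, ?_, ?_⟩
        · intro v
          have := hF v
          have := (eff_pt G Q 1 (by norm_num)) v
          simp only [Pi.add_apply]; linarith
        · rw [deg_add, deg_pt, hdegF]
        · simp only [Pi.add_apply, pt, hFP]
          rw [if_neg (fun h => hQP h.symm : ¬ P = Q)]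
          norm_num
        · rw [show D' - (F + G.pt Q 1) = (D' - G.pt Q 1) - F by ring]
          exact hnlF
      by_cases hQ : ∃ Q, Q ≠ P ∧ 0 < E0 Q
      · obtain ⟨Q, hQP, hpos⟩ := hQ
        exact caseA D E0 Q hQP hpos hE0 (by rw [hdeg]; push_cast; ring) hnl
      · push_neg at hQ
        have hE0eq : E0 = G.pt P ((k:ℤ)+1) := by
          funext v
          by_cases hv : v = P
          · rw [hv]
            have : G.deg E0 = E0 P := by
              rw [deg]
              apply Finset.sum_eq_single
              · intro u _ hu
                have h1 := hQ u hu
                have h2 := hE0 u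
                omega
              · intro h; exact absurd (Finset.mem_univ P) h
            simp only [pt, if_pos rfl]
            rw [← this, hdeg]; push_cast; ring
          · have h1 := hQ v hv
            have h2 := hE0 v
            simp only [pt, if_neg hv]
            omega
        rw [hE0eq] at hnl
        by_cases hk : G.LinNonempty (D - G.pt P (k:ℤ))
        · have h2 : ¬ G.LinNonempty ((D - G.pt P (k:ℤ)) - G.pt P 1) := by
            have heq : (D - G.pt P (k:ℤ)) - G.pt P 1 = D - G.pt P ((k:ℤ)+1) := by
              funext v
              simp only [Pi.sub_apply, pt]
              by_cases hv : v = P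
              · simp [hv]; ring
              · simp [hv]
            rw [heq]; exact hnl
          obtain ⟨Q, hQP, hnlQ⟩ := key G hG P _ hk h2
          apply caseA D (G.pt P (k:ℤ) + G.pt Q 1) Q hQP
          · simp only [Pi.add_apply, pt, if_pos rfl]
            rw [if_neg hQP]; norm_num
          · intro v
            have h1 := (eff_pt G P (k:ℤ) (by positivity)) v
            have h2 := (eff_pt G Q 1 (by norm_num)) v
            simp only [Pi.add_apply]; linarith
          · rw [deg_add, deg_pt, deg_pt]
          · rw [show D - (G.pt P (k:ℤ) + G.pt Q 1) = (D - G.pt P (k:ℤ)) - G.pt Q 1 by ring]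
            exact hnlQ
        · obtain ⟨F, hF, hdegF, hFP, hnlF⟩ :=
            ih D (G.pt P (k:ℤ)) (eff_pt G P (k:ℤ) (by positivity)) (deg_pt G P (k:ℤ)) hk
          obtain ⟨Q, hQP⟩ := Fintype.exists_ne_of_one_lt_card hG.2 P
          refine ⟨F + G.pt Q 1, ?_, ?_, ?_, ?_⟩
          · intro v
            have h1 := hF v
            have h2 := (eff_pt G Q 1 (by norm_num)) v
            simp only [Pi.add_apply]; linarith
          · rw [deg_add, deg_pt, hdegF]
          · simp only [Pi.add_apply, pt, hFP]
            rw [if_neg (fun h => hQP h.symm : ¬ P = Q)]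
            norm_num
          · intro hlin
            apply hnlF
            apply lin_mono G (D - F) (G.pt Q 1) (eff_pt G Q 1 (by norm_num))
            rw [show D - F - G.pt Q 1 = D - (F + G.pt Q 1) by ring]
            exact hlin

end Multigraph
/-- On a simple graph, every divisor has a proof for its rank not supported at a
given vertex `P`. -/
theorem exists_proof_avoiding_vertex (G : Multigraph) (hG : G.Simple)
    (D : G.V → ℤ) (P : G.V) :
    ∃ E : G.V → ℤ, G.Effective E ∧ G.deg E = G.rank D + 1 ∧ E P = 0 ∧
      ¬ G.LinNonempty (D - E) := by
  by_cases hLin : G.LinNonempty D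
  · set S : Set ℕ := {k : ℕ | ∀ E : G.V → ℤ, G.Effective E → G.deg E = (k : ℤ) →
        G.LinNonempty (D - E)} with hS
    have hrank : G.rank D = ((sSup S : ℕ) : ℤ) := by
      rw [Multigraph.rank, if_pos hLin]
    have hdegD : 0 ≤ G.deg D := G.deg_nonneg_of_lin D hLin
    have hbdd : BddAbove S := by
      refine ⟨(G.deg D).toNat, fun k hk => ?_⟩
      have h1 := hk (G.pt P (k:ℤ)) (G.eff_pt P (k:ℤ) (by positivity)) (G.deg_pt P (k:ℤ))
      have h2 := G.deg_nonneg_of_lin _ h1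
      rw [G.deg_sub, G.deg_pt] at h2
      have h3 : (k:ℤ) ≤ G.deg D := by linarith
      omega
    have hnot : (sSup S + 1) ∉ S := fun h => by
      have := le_csSup hbdd h
      omega
    have hnot' : ¬ ∀ E : G.V → ℤ, G.Effective E → G.deg E = ((sSup S + 1 : ℕ) : ℤ) →
        G.LinNonempty (D - E) := fun hforall => hnot (by rw [hS]; exact hforall)
    push_neg at hnot'
    obtain ⟨E0, hE0eff, hE0deg, hE0nl⟩ := hnot'
    obtain ⟨E, hEeff, hEdeg, hEP, hEnl⟩ :=
      G.main_ind hG P (sSup S + 1) D E0 hE0eff hE0deg hE0nl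
    exact ⟨E, hEeff, by rw [hEdeg, hrank]; push_cast; ring, hEP, hEnl⟩
  · refine ⟨0, fun v => le_refl 0, ?_, rfl, ?_⟩
    · rw [Multigraph.rank, if_neg hLin]
      simp [Multigraph.deg]
    · rw [sub_zero]
      exact hLin
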